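/- Let A be a set of letters, Γ ⊆ A a finite subset, and d : Γ × {ℓ ∈ ℕ | ℓ ≥ 2} → A an injective map whose values lie outside Γ. If w, w' ∈ Γ* satisfy BC(w) = BC(w'), then w = w'. (In other words, Γ-block compression is injective on Γ*.) -/

import Mathlib

def BC {A : Type*} [DecidableEq A] (Γ : Finset A) (d : A → ℕ → A) : List A → List A
  | [] => []
  | a :: w =>
    (if a ∈ Γ ∧ 2 ≤ (w.takeWhile (· = a)).length + 1
      then [d a ((w.takeWhile (· = a)).length + 1)]
      else List.replicate ((w.takeWhile (· = a)).length + 1) a)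
    ++ BC Γ d (w.dropWhile (· = a))
  termination_by w => w.length
  decreasing_by
    simp only [List.length_cons]
    exact Nat.lt_succ_of_le (List.dropWhile_sublist _).length_le

lemma BC_cons {A : Type*} [DecidableEq A] (Γ : Finset A) (d : A → ℕ → A) (a : A) (t : List A) :
    BC Γ d (a :: t) = (if a ∈ Γ ∧ 2 ≤ (t.takeWhile (· = a)).length + 1
      then [d a ((t.takeWhile (· = a)).length + 1)]
      else List.replicate ((t.takeWhile (· = a)).length + 1) a)
    ++ BC Γ d (t.dropWhile (· = a)) := by
  rw [BC]

lemma BC_nil {A : Type*} [DecidableEq A] (Γ : Finset A) (d : A → ℕ → A) :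
    BC Γ d [] = [] := by rw [BC]

lemma BC_ne_nil {A : Type*} [DecidableEq A] (Γ : Finset A) (d : A → ℕ → A) (a : A)
    (t : List A) : BC Γ d (a :: t) ≠ [] := by
  rw [BC_cons]
  intro h
  rcases List.append_eq_nil_iff.1 h with ⟨h1, -⟩
  split at h1 <;> simp at h1

lemma takeWhile_eq_replicate {A : Type*} [DecidableEq A] (a : A) (t : List A) :
    t.takeWhile (· = a) = List.replicate (t.takeWhile (· = a)).length a := by
  apply List.eq_replicate_of_mem
  intro b hb
  have := List.mem_takeWhile_imp hb
  simpa using this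

lemma cons_eq_replicate_append {A : Type*} [DecidableEq A] (a : A) (t : List A) :
    a :: t = List.replicate ((t.takeWhile (· = a)).length + 1) a ++ t.dropWhile (· = a) := by
  rw [List.replicate_succ, List.cons_append]
  congr 1
  rw [← takeWhile_eq_replicate a t]
  exact (List.takeWhile_append_dropWhile ..).symm

theorem stmt4 {A : Type*} [DecidableEq A] (Γ : Finset A) (d : A → ℕ → A)
    (hd_fresh : ∀ a ∈ Γ, ∀ ℓ : ℕ, 2 ≤ ℓ → d a ℓ ∉ Γ)
    (hd_inj : ∀ a ∈ Γ, ∀ a' ∈ Γ, ∀ ℓ ℓ' : ℕ, 2 ≤ ℓ → 2 ≤ ℓ' →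
      d a ℓ = d a' ℓ' → a = a' ∧ ℓ = ℓ')
    (w w' : List A) (hw : ∀ a ∈ w, a ∈ Γ) (hw' : ∀ a ∈ w', a ∈ Γ)
    (h : BC Γ d w = BC Γ d w') :
    w = w' := by
  suffices H : ∀ n (w w' : List A), w.length ≤ n → (∀ a ∈ w, a ∈ Γ) → (∀ a ∈ w', a ∈ Γ) →
      BC Γ d w = BC Γ d w' → w = w' from H w.length w w' le_rfl hw hw' h
  clear h hw hw' w w'
  intro n
  induction n with
  | zero =>
    intro w w' hlen _ hw' h
    rw [List.length_eq_zero_iff.1 (Nat.le_zero.1 hlen)] at h ⊢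
    rw [BC_nil] at h
    cases w' with
    | nil => rfl
    | cons a t => exact absurd h.symm (BC_ne_nil Γ d a t)
  | succ n ih =>
    intro w w' hlen hw hw' h
    cases w with
    | nil =>
      rw [BC_nil] at h
      cases w' with
      | nil => rfl
      | cons a t => exact absurd h.symm (BC_ne_nil Γ d a t)
    | cons a t =>
      cases w' with
      | nil => rw [BC_nil] at h; exact absurd h (BC_ne_nil Γ d a t)
      | cons a' t' =>
        have ha : a ∈ Γ := hw a List.mem_cons_self
        have ha' : a' ∈ Γ := hw' a' List.mem_cons_self
        rw [BC_cons, BC_cons] at h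
        have htlen : t.length ≤ n := Nat.succ_le_succ_iff.1 hlen
        have hdrop : (t.dropWhile (· = a)).length ≤ n :=
          le_trans (List.dropWhile_sublist _).length_le htlen
        have hwdrop : ∀ b ∈ t.dropWhile (· = a), b ∈ Γ := fun b hb =>
          hw b (List.mem_cons_of_mem _ ((List.dropWhile_sublist _).mem hb))
        have hwdrop' : ∀ b ∈ t'.dropWhile (· = a'), b ∈ Γ := fun b hb =>
          hw' b (List.mem_cons_of_mem _ ((List.dropWhile_sublist _).mem hb))
        by_cases h2 : 2 ≤ (t.takeWhile (· = a)).length + 1 <;>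
          by_cases h2' : 2 ≤ (t'.takeWhile (· = a')).length + 1
        · -- both compressed
          rw [if_pos ⟨ha, h2⟩, if_pos ⟨ha', h2'⟩] at h
          simp only [List.singleton_append, List.cons.injEq] at h
          obtain ⟨heq, hℓ⟩ := hd_inj a ha a' ha' _ _ h2 h2' h.1
          have hrest := ih _ _ hdrop hwdrop hwdrop' h.2
          rw [cons_eq_replicate_append a t, cons_eq_replicate_append a' t', hrest, hℓ, heq]
        · -- left compressed, right not: contradiction
          rw [if_pos ⟨ha, h2⟩, if_neg (fun hc => h2' hc.2)] at h
          exfalso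
          have hk0 : (t'.takeWhile (· = a')).length + 1 = 1 := by omega
          rw [hk0] at h
          simp only [List.singleton_append, List.replicate_one, List.cons.injEq] at h
          exact hd_fresh a ha _ h2 (h.1 ▸ ha')
        · -- right compressed, left not
          rw [if_neg (fun hc => h2 hc.2), if_pos ⟨ha', h2'⟩] at h
          exfalso
          have hk0 : (t.takeWhile (· = a)).length + 1 = 1 := by omega
          rw [hk0] at h
          simp only [List.singleton_append, List.replicate_one, List.cons.injEq] at h
          exact hd_fresh a' ha' _ h2' (h.1 ▸ ha)
        · -- neither compressed
          rw [if_neg (fun hc => h2 hc.2), if_neg (fun hc => h2' hc.2)] at h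
          have hk0 : (t.takeWhile (· = a)).length = 0 := by omega
          have hk0' : (t'.takeWhile (· = a')).length = 0 := by omega
          rw [hk0, hk0'] at h
          simp only [zero_add, List.replicate_one, List.singleton_append, List.cons.injEq] at h
          have hdt : t.dropWhile (· = a) = t := by
            have := List.takeWhile_append_dropWhile (p := (· = a)) (l := t)
            rwa [List.length_eq_zero_iff.1 hk0, List.nil_append] at this
          have hdt' : t'.dropWhile (· = a') = t' := by
            have := List.takeWhile_append_dropWhile (p := (· = a')) (l := t')
            rwa [List.length_eq_zero_iff.1 hk0', List.nil_append] at this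
          rw [hdt, hdt'] at h
          rw [h.1, ih t t' htlen (fun b hb => hw b (List.mem_cons_of_mem _ hb))
            (fun b hb => hw' b (List.mem_cons_of_mem _ hb)) h.2]
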